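/- Let (Q,I) be a special biserial bound quiver, let a, b be simple cycles at the same vertex x with no common arrow such that the last arrow of a composed with its first arrow lies in I, and suppose there is a binomial relation of the form (ab)^n - λ(ba)^m in I with n, m ≥ 1. Then n = m. -/

import Mathlib

open Classical

noncomputable section

/-- A finite quiver: finite sets of vertices and arrows with source and target maps. -/
structure FQuiver where
  V : Type
  A : Type
  [fintV : Fintype V]
  [decV : DecidableEq V]
  [fintA : Fintype A]
  [decA : DecidableEq A]
  src : A → V
  tgt : A → V

attribute [instance] FQuiver.fintV FQuiver.decV FQuiver.fintA FQuiver.decA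

namespace FQuiver

variable {Q : FQuiver}

/-- Oriented paths in a quiver. -/
inductive Path (Q : FQuiver) : Q.V → Q.V → Type
  | nil (v : Q.V) : Path Q v v
  | cons (a : Q.A) {w : Q.V} (p : Path Q (Q.tgt a) w) : Path Q (Q.src a) w

/-- Composition (concatenation) of paths. -/
def Path.comp : ∀ {u v w : Q.V}, Path Q u v → Path Q v w → Path Q u w
  | _, _, _, .nil _, q => q
  | _, _, _, .cons a p, q => .cons a (Path.comp p q)

/-- Length of a path. -/
def Path.length : ∀ {u v : Q.V}, Path Q u v → ℕ
  | _, _, .nil _ => 0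
  | _, _, .cons _ p => Path.length p + 1

/-- The list of arrows of a path, in order. -/
def Path.arrows : ∀ {u v : Q.V}, Path Q u v → List Q.A
  | _, _, .nil _ => []
  | _, _, .cons a p => a :: Path.arrows p

/-- An arrow regarded as a path of length one. -/
def arrow (Q : FQuiver) (a : Q.A) : Path Q (Q.src a) (Q.tgt a) := .cons a (.nil _)

/-- Power of an oriented cycle. -/
def Path.pow {x : Q.V} (c : Path Q x x) : ℕ → Path Q x x
  | 0 => .nil x
  | n + 1 => c.comp (Path.pow c n)

/-- Transport a path along equalities of its endpoints. -/
def Path.cast {u u' v v' : Q.V} (hu : u = u') (hv : v = v') (p : Path Q u v) :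
    Path Q u' v' := by subst hu; subst hv; exact p

/-- The length-two path `ab` formed by two composable arrows. -/
def comp2 (a b : Q.A) (h : Q.src b = Q.tgt a) : Path Q (Q.src a) (Q.tgt b) :=
  (arrow Q a).comp ((arrow Q b).cast h rfl)

/-- The set of all paths of a quiver, bundled with their endpoints. -/
def PathsSigma (Q : FQuiver) : Type := Σ (u : Q.V) (v : Q.V), Path Q u v

/-- The underlying vector space of the path algebra `kQ`: the free `k`-module on paths. -/
abbrev PAlg (k : Type) [Field k] (Q : FQuiver) : Type := PathsSigma Q →₀ k

/-- The basis vector of `kQ` corresponding to a path. -/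
def pvec (k : Type) [Field k] {u v : Q.V} (p : Path Q u v) : PAlg k Q :=
  Finsupp.single ⟨u, v, p⟩ 1

/-- Left multiplication of an element of `kQ` by a path. -/
def lmul (k : Type) [Field k] {u v : Q.V} (p : Path Q u v) (x : PAlg k Q) : PAlg k Q :=
  x.sum fun s c => if h : s.1 = v then c • pvec k (p.comp ((Sigma.snd (Sigma.snd s)).cast h rfl)) else 0

/-- Right multiplication of an element of `kQ` by a path. -/
def rmul (k : Type) [Field k] {u v : Q.V} (x : PAlg k Q) (p : Path Q u v) : PAlg k Q :=
  x.sum fun s c => if h : s.2.1 = u then c • pvec k (Path.comp ((Sigma.snd (Sigma.snd s)).cast rfl h) p) else 0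

/-- The two-sided ideal of `kQ` generated by a set of elements. -/
def idealGen (k : Type) [Field k] (Q : FQuiver) (s : Set (PAlg k Q)) : Submodule k (PAlg k Q) :=
  sInf {M : Submodule k (PAlg k Q) |
    s ⊆ (M : Set (PAlg k Q)) ∧
    ∀ (u v : Q.V) (p : Path Q u v) (x : PAlg k Q), x ∈ M → lmul k p x ∈ M ∧ rmul k x p ∈ M}

/-- An admissible (two-sided) ideal `(kQ⁺)ᵐ ⊆ I ⊆ (kQ⁺)²` of the path algebra. -/
structure AdmissibleIdeal (k : Type) [Field k] (Q : FQuiver) where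
  I : Submodule k (PAlg k Q)
  lmul_mem : ∀ {u v : Q.V} (p : Path Q u v) {x : PAlg k Q}, x ∈ I → lmul k p x ∈ I
  rmul_mem : ∀ {u v : Q.V} (p : Path Q u v) {x : PAlg k Q}, x ∈ I → rmul k x p ∈ I
  bound : ℕ
  two_le_bound : 2 ≤ bound
  pow_le : ∀ {u v : Q.V} (p : Path Q u v), bound ≤ p.length → pvec k p ∈ I
  le_sq : ∀ x ∈ I, ∀ s ∈ x.support, 2 ≤ (Sigma.snd (Sigma.snd s)).length

/-- A special biserial bound quiver `(Q, I)`. -/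
structure SpecialBiserial (k : Type) [Field k] (Q : FQuiver) extends AdmissibleIdeal k Q where
  src_card : ∀ v : Q.V, Fintype.card {a : Q.A // Q.src a = v} ≤ 2
  tgt_card : ∀ v : Q.V, Fintype.card {a : Q.A // Q.tgt a = v} ≤ 2
  unique_succ : ∀ (a b c : Q.A) (hb : Q.src b = Q.tgt a) (hc : Q.src c = Q.tgt a),
      pvec k (comp2 a b hb) ∉ I → pvec k (comp2 a c hc) ∉ I → b = c
  unique_pred : ∀ (a b c : Q.A) (hb : Q.tgt b = Q.src a) (hc : Q.tgt c = Q.src a),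
      pvec k (comp2 b a hb.symm) ∉ I → pvec k (comp2 c a hc.symm) ∉ I → b = c

/-- A binomial relation `u - λv ∈ I` between distinct parallel paths not in `I`. -/
structure BinRel {k : Type} [Field k] {Q : FQuiver} (J : AdmissibleIdeal k Q) where
  s : Q.V
  t : Q.V
  u : Path Q s t
  v : Path Q s t
  coef : k
  coef_ne : coef ≠ 0
  u_ne_v : u ≠ v
  u_not_mem : pvec k u ∉ J.I
  v_not_mem : pvec k v ∉ J.I
  rel_mem : pvec k u - coef • pvec k v ∈ J.I

/-- `I` is generated by a set of paths (monomial relations) together with the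
binomial relations in `R`. -/
def Generates {k : Type} [Field k] {Q : FQuiver} (J : AdmissibleIdeal k Q)
    (R : Set (BinRel J)) : Prop :=
  ∃ P : Set (PathsSigma Q),
    (∀ s ∈ P, pvec k (Sigma.snd (Sigma.snd s)) ∈ J.I) ∧
    J.I = idealGen k Q
      (((fun s : PathsSigma Q => pvec k (Sigma.snd (Sigma.snd s))) '' P) ∪
       ((fun r : BinRel J => pvec k r.u - r.coef • pvec k r.v) '' R))

/-- The ideal `S ⊆ A = kQ/I`: the span of the residue classes of the paths occurring
in the binomial relations of `R`. -/
def Smod {k : Type} [Field k] {Q : FQuiver} (J : AdmissibleIdeal k Q) (R : Set (BinRel J)) :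
    Submodule k (PAlg k Q ⧸ J.I) :=
  Submodule.span k
    ((fun r : BinRel J => (Submodule.Quotient.mk (pvec k r.u) : PAlg k Q ⧸ J.I)) '' R)

/-- Number of connected components of the underlying graph of `Q`. -/
def numComponents (Q : FQuiver) : ℕ :=
  Nat.card (Quot (fun u v : Q.V => ∃ a : Q.A, Q.src a = u ∧ Q.tgt a = v))

/-- A quiver is acyclic (triangular) if it has no nontrivial oriented cycle. -/
def Acyclic (Q : FQuiver) : Prop := ∀ (x : Q.V) (p : Path Q x x), p.length = 0

/-- A simple cycle: a nontrivial oriented cycle visiting no vertex twice. -/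
def IsSimpleCycle {x : Q.V} (p : Path Q x x) : Prop :=
  p.length ≠ 0 ∧ (p.arrows.map Q.src).Nodup

/-- `dim_k S = χ(Q)`, written additively: `dim S + |Q₀| = |Q₁| + N`. -/
def EulerEq {k : Type} [Field k] {Q : FQuiver} (J : AdmissibleIdeal k Q)
    (R : Set (BinRel J)) : Prop :=
  Module.finrank k ↥(Smod J R) + Fintype.card Q.V = Fintype.card Q.A + numComponents Q

/-- The word in the free group on the arrows determined by a path. -/
def pathWord (Q : FQuiver) {u v : Q.V} (p : Path Q u v) : FreeGroup Q.A :=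
  (p.arrows.map FreeGroup.of).prod

/-- `T` is a spanning tree of (the underlying graph of) `Q`. -/
def IsSpanningTree (Q : FQuiver) (T : Set Q.A) : Prop :=
  (∀ u v : Q.V,
      Quot.mk (fun a b : Q.V => ∃ e ∈ T, Q.src e = a ∧ Q.tgt e = b) u =
      Quot.mk (fun a b : Q.V => ∃ e ∈ T, Q.src e = a ∧ Q.tgt e = b) v) ∧
  Nat.card T + 1 = Fintype.card Q.V

/-- The fundamental group of the bound quiver `(Q, I)` (for connected `Q`,
with respect to a spanning tree `T`): the free group on the arrows modulo the
tree arrows and the homotopy relations coming from the binomial relations. -/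
abbrev pi1 {k : Type} [Field k] {Q : FQuiver} (J : AdmissibleIdeal k Q)
    (T : Set Q.A) (R : Set (BinRel J)) : Type :=
  FreeGroup Q.A ⧸ Subgroup.normalClosure
    ((FreeGroup.of '' T) ∪
     ((fun r : BinRel J => pathWord Q r.u * (pathWord Q r.v)⁻¹) '' R))

end FQuiver

namespace FQuiver

variable {Q : FQuiver} {k : Type} [Field k]

theorem Path.comp_nil : ∀ {u v : Q.V} (p : Path Q u v), p.comp (.nil v) = p
  | _, _, .nil _ => rfl
  | _, _, .cons a p => by rw [Path.comp, Path.comp_nil]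

theorem Path.comp_assoc : ∀ {u v w z : Q.V} (p : Path Q u v) (q : Path Q v w) (r : Path Q w z),
    (p.comp q).comp r = p.comp (q.comp r)
  | _, _, _, _, .nil _, _, _ => rfl
  | _, _, _, _, .cons a p, q, r => by
      rw [Path.comp, Path.comp, Path.comp, Path.comp_assoc]

theorem Path.arrows_comp : ∀ {u v w : Q.V} (p : Path Q u v) (q : Path Q v w),
    (p.comp q).arrows = p.arrows ++ q.arrows
  | _, _, _, .nil _, q => rfl
  | _, _, _, .cons a p, q => by
      rw [Path.comp, Path.arrows, Path.arrows, Path.arrows_comp]; rfl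

@[simp] theorem Path.arrows_cast {u u' v v' : Q.V} (hu : u = u') (hv : v = v')
    (p : Path Q u v) : (p.cast hu hv).arrows = p.arrows := by
  subst hu; subst hv; rfl

@[simp] theorem Path.cast_self {u v : Q.V} (p : Path Q u v) (h : u = u) (h' : v = v) :
    p.cast h h' = p := rfl

theorem Path.length_arrows : ∀ {u v : Q.V} (p : Path Q u v), p.arrows.length = p.length
  | _, _, .nil _ => rfl
  | _, _, .cons a p => by rw [Path.arrows, Path.length, List.length_cons, Path.length_arrows]

theorem Path.head_src {u v : Q.V} (p : Path Q u v) (e : Q.A)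
    (h : p.arrows.head? = some e) : Q.src e = u := by
  cases p with
  | nil => simp [Path.arrows] at h
  | cons a p => simp [Path.arrows] at h; subst h; rfl

theorem Path.eq_of_arrows_nil : ∀ {u v : Q.V} (p : Path Q u v), p.arrows = [] → u = v := by
  intro u v p
  cases p with
  | nil => intro _; rfl
  | cons a p => intro h; simp [Path.arrows] at h

theorem Path.last_tgt : ∀ {u v : Q.V} (p : Path Q u v) (e : Q.A),
    p.arrows.getLast? = some e → Q.tgt e = v := by
  intro u v p
  induction p with
  | nil => intro e h; simp [Path.arrows] at h
  | cons a p ih =>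
    intro e h
    rw [Path.arrows] at h
    cases hp : p.arrows with
    | nil =>
      rw [hp] at h
      simp at h
      subst h
      exact Path.eq_of_arrows_nil p hp
    | cons a' t =>
      rw [hp, List.getLast?_cons_cons, ← hp] at h
      exact ih e h

theorem Path.head_inv {u v : Q.V} (p : Path Q u v) (e : Q.A)
    (h : p.arrows.head? = some e) :
    ∃ (he : u = Q.src e) (p' : Path Q (Q.tgt e) v), p = (Path.cons e p').cast he.symm rfl := by
  cases p with
  | nil => simp [Path.arrows] at h
  | cons a p =>
    simp [Path.arrows] at h
    subst h
    exact ⟨rfl, p, rfl⟩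

theorem lmul_pvec {u v w : Q.V} (p : Path Q u v) (q : Path Q v w) :
    lmul k p (pvec k q) = pvec k (p.comp q) := by
  unfold lmul pvec
  refine (Finsupp.sum_single_index ?_).trans ?_
  · rw [dif_pos rfl, zero_smul]
  · rw [dif_pos rfl, one_smul]
    rfl

theorem rmul_pvec {u v w : Q.V} (p : Path Q u v) (q : Path Q w u) :
    rmul k (pvec k q) p = pvec k (q.comp p) := by
  unfold rmul pvec
  refine (Finsupp.sum_single_index ?_).trans ?_
  · rw [dif_pos rfl, zero_smul]
  · rw [dif_pos rfl, one_smul]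
    rfl

theorem lmul_add {u v : Q.V} (p : Path Q u v) (y z : PAlg k Q) :
    lmul k p (y + z) = lmul k p y + lmul k p z := by
  unfold lmul
  apply Finsupp.sum_add_index'
  · intro s; split <;> simp
  · intro s b₁ b₂; split <;> simp [add_smul]

theorem lmul_smul {u v : Q.V} (p : Path Q u v) (c : k) (y : PAlg k Q) :
    lmul k p (c • y) = c • lmul k p y := by
  unfold lmul
  rw [Finsupp.smul_sum, Finsupp.sum_smul_index' (fun s => by split <;> simp)]
  congr 1
  funext s d
  split <;> simp [smul_smul]

theorem lmul_sub_smul {u v w : Q.V} (p : Path Q u v) (q r : Path Q v w) (c : k) :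
    lmul k p (pvec k q - c • pvec k r) = pvec k (p.comp q) - c • pvec k (p.comp r) := by
  rw [sub_eq_add_neg, ← neg_smul, lmul_add, lmul_smul, lmul_pvec, lmul_pvec, neg_smul,
    ← sub_eq_add_neg]

theorem nil_not_mem (J : AdmissibleIdeal k Q) (v : Q.V) :
    pvec k (Path.nil v : Path Q v v) ∉ J.I := by
  intro h
  have h2 := J.le_sq _ h ⟨v, v, .nil v⟩ ?_
  · simp [Path.length] at h2
  · show (⟨v, v, .nil v⟩ : PathsSigma Q) ∈ (Finsupp.single (⟨v, v, .nil v⟩ : PathsSigma Q) (1:k)).support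
    rw [Finsupp.support_single_ne_zero _ one_ne_zero]
    simp

theorem mem_comp_right (J : AdmissibleIdeal k Q) {u v w : Q.V} (p : Path Q u v)
    (r : Path Q v w) (h : pvec k p ∈ J.I) : pvec k (p.comp r) ∈ J.I := by
  have := J.rmul_mem r h
  rwa [rmul_pvec] at this

theorem mem_cons (J : AdmissibleIdeal k Q) {v : Q.V} (e : Q.A) (p : Path Q (Q.tgt e) v)
    (h : pvec k p ∈ J.I) : pvec k (Path.cons e p) ∈ J.I := by
  have := J.lmul_mem (arrow Q e) h
  rwa [lmul_pvec] at this

theorem exists_comp_of_prefix {s t : Q.V} (q : Path Q s t) :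
    ∀ {v : Q.V} (p : Path Q s v), q.arrows <+: p.arrows → ∃ r : Path Q t v, p = q.comp r := by
  induction q with
  | nil s => exact fun p _ => ⟨p, rfl⟩
  | cons f q' ih =>
    intro v p hp
    have hh : p.arrows.head? = some f := by
      obtain ⟨l, hl⟩ := hp
      rw [← hl]; rfl
    obtain ⟨he, p', rfl⟩ := Path.head_inv p f hh
    rw [Path.cast_self] at hp ⊢
    rw [Path.arrows, Path.arrows, List.cons_prefix_cons] at hp
    obtain ⟨r, hr⟩ := ih p' hp.2
    exact ⟨r, by rw [Path.comp, ← hr]⟩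

theorem infix_mem (J : AdmissibleIdeal k Q) {s t : Q.V} (q : Path Q s t)
    (hq : pvec k q ∈ J.I) :
    ∀ {u v : Q.V} (p : Path Q u v), q.arrows <:+: p.arrows → pvec k p ∈ J.I := by
  cases q with
  | nil => exact absurd hq (nil_not_mem J _)
  | cons f q'' =>
    intro u v p
    induction p with
    | nil w =>
      intro h
      obtain ⟨l₁, l₂, hl⟩ := h
      simp [Path.arrows] at hl
    | cons e p' ih =>
      intro h
      obtain ⟨l₁, l₂, hl⟩ := h
      cases l₁ with
      | nil =>
        simp only [List.nil_append, Path.arrows, List.cons_append, List.cons.injEq] at hl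
        obtain ⟨rfl, hl2⟩ := hl
        obtain ⟨r, hr⟩ := exists_comp_of_prefix (Path.cons f q'') (Path.cons f p')
          ⟨l₂, by rw [Path.arrows, Path.arrows, List.cons_append, hl2]⟩
        rw [hr]
        exact mem_comp_right J _ _ hq
      | cons y l₁' =>
        simp only [Path.arrows, List.cons_append, List.cons.injEq] at hl
        exact mem_cons J e p' (ih ⟨l₁', l₂, hl.2⟩)

theorem Path.pow_add {x : Q.V} (c : Path Q x x) : ∀ (i j : ℕ),
    c.pow (i + j) = (c.pow i).comp (c.pow j)
  | 0, j => by rw [Nat.zero_add]; rfl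
  | i + 1, j => by
    rw [Nat.succ_add]
    show c.comp (c.pow (i + j)) = (c.comp (c.pow i)).comp (c.pow j)
    rw [Path.pow_add c i j, ← Path.comp_assoc]

theorem pow_comp_arrows {x : Q.V} (p q : Path Q x x) : ∀ (n : ℕ),
    ((p.comp q).pow (n + 1)).arrows = p.arrows ++ (((q.comp p).pow n).arrows ++ q.arrows)
  | 0 => by
    show ((p.comp q).comp (.nil x)).arrows = _
    rw [Path.comp_nil, Path.arrows_comp]
    rfl
  | n + 1 => by
    show ((p.comp q).comp ((p.comp q).pow (n + 1))).arrows =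
      p.arrows ++ ((((q.comp p).comp ((q.comp p).pow n)).arrows) ++ q.arrows)
    rw [Path.arrows_comp, pow_comp_arrows p q n, Path.arrows_comp, Path.arrows_comp]
    simp [Path.arrows_comp, List.append_assoc]

theorem comp_pow_swap {x : Q.V} (p q : Path Q x x) : ∀ (n : ℕ),
    q.comp ((p.comp q).pow n) = ((q.comp p).pow n).comp q
  | 0 => by
    show q.comp (.nil x) = (Path.nil x).comp q
    rw [Path.comp_nil]; rfl
  | n + 1 => by
    show q.comp ((p.comp q).comp ((p.comp q).pow n)) = ((q.comp p).comp ((q.comp p).pow n)).comp q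
    rw [← Path.comp_assoc q (p.comp q), ← Path.comp_assoc q p q,
      Path.comp_assoc (q.comp p) q, comp_pow_swap p q n, ← Path.comp_assoc]

theorem exists_append_of_getLast? {α : Type*} : ∀ {l : List α} {x : α},
    l.getLast? = some x → ∃ l', l = l' ++ [x]
  | [], x, h => by simp at h
  | [a], x, h => by
    simp at h; exact ⟨[], by rw [h]; rfl⟩
  | a :: b :: t, x, h => by
    rw [List.getLast?_cons_cons] at h
    obtain ⟨l', hl⟩ := exists_append_of_getLast? h
    exact ⟨a :: l', by rw [List.cons_append, ← hl]⟩

theorem pair_infix {α : Type*} {l₁ l₂ : List α} {x y : α}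
    (h₁ : l₁.getLast? = some x) (h₂ : l₂.head? = some y) : [x, y] <:+: l₁ ++ l₂ := by
  obtain ⟨l₁', rfl⟩ := exists_append_of_getLast? h₁
  cases l₂ with
  | nil => simp at h₂
  | cons z t =>
    simp at h₂; subst h₂
    exact ⟨l₁', t, by simp⟩

theorem head?_append_left {α : Type*} {l₁ : List α} (l₂ : List α) {y : α}
    (h : l₁.head? = some y) : (l₁ ++ l₂).head? = some y := by
  cases l₁ <;> simp_all

theorem infix_append_left {α : Type*} {l l₁ : List α} (l₂ : List α) (h : l <:+: l₁) :
    l <:+: l₁ ++ l₂ :=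
  h.trans (l₁.prefix_append l₂).isInfix

end FQuiver



namespace FQuiver

/-- if `a`, `b` are simple cycles at `x` without common arrow, the
composite of the last and first arrows of `a` lies in `I`, and
`(ab)ⁿ - λ(ba)ᵐ ∈ I` is a binomial relation with `n, m ≥ 1`, then `n = m`. -/
theorem stmt4 {k : Type} [Field k] {Q : FQuiver} (SB : SpecialBiserial k Q)
    {x : Q.V} (a b : Path Q x x) (ha : IsSimpleCycle a) (hb : IsSimpleCycle b)
    (hdisj : ∀ e : Q.A, e ∈ a.arrows → e ∉ b.arrows)
    (al1 alr : Q.A)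
    (ha1 : a.arrows.head? = some al1) (har : a.arrows.getLast? = some alr)
    (hsa1 : Q.src al1 = x) (htar : Q.tgt alr = x)
    (hmem : pvec k (comp2 alr al1 (by rw [hsa1, htar])) ∈ SB.I)
    (n m : ℕ) (hn : 1 ≤ n) (hm : 1 ≤ m) (c : k) (hc : c ≠ 0)
    (hne : (a.comp b).pow n ≠ (b.comp a).pow m)
    (hu : pvec k ((a.comp b).pow n) ∉ SB.I)
    (hv : pvec k ((b.comp a).pow m) ∉ SB.I)
    (hrel : pvec k ((a.comp b).pow n) - c • pvec k ((b.comp a).pow m) ∈ SB.I) :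
    n = m := by
  obtain ⟨n', rfl⟩ : ∃ n', n = n' + 1 := ⟨n - 1, by omega⟩
  obtain ⟨m', rfl⟩ : ∃ m', m = m' + 1 := ⟨m - 1, by omega⟩
  have hB : b.arrows ≠ [] := by
    intro h
    exact hb.1 (by rw [← Path.length_arrows, h]; rfl)
  obtain ⟨bl1, hb1⟩ : ∃ e, b.arrows.head? = some e := by
    cases hbb : b.arrows with
    | nil => exact absurd hbb hB
    | cons z t => exact ⟨z, by simp [hbb]⟩
  obtain ⟨blr, hbr⟩ : ∃ e, b.arrows.getLast? = some e := by
    cases hbb : b.arrows.getLast? with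
    | none => exact absurd (List.getLast?_eq_none_iff.mp hbb) hB
    | some z => exact ⟨z, rfl⟩
  have hsb1 : Q.src bl1 = x := Path.head_src b bl1 hb1
  have htbr : Q.tgt blr = x := Path.last_tgt b blr hbr
  have hUhead : ((a.comp b).pow (n' + 1)).arrows.head? = some al1 := by
    show ((a.comp b).comp ((a.comp b).pow n')).arrows.head? = some al1
    rw [Path.arrows_comp, Path.arrows_comp, List.append_assoc]
    exact head?_append_left _ ha1
  have hVhead : ((b.comp a).pow (m' + 1)).arrows.head? = some bl1 := by
    show ((b.comp a).comp ((b.comp a).pow m')).arrows.head? = some bl1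
    rw [Path.arrows_comp, Path.arrows_comp, List.append_assoc]
    exact head?_append_left _ hb1
  have hc1 : ¬ m' < n' := by
    intro hlt
    have h1 : pvec k (a.comp ((a.comp b).pow (n' + 1))) -
        c • pvec k (a.comp ((b.comp a).pow (m' + 1))) ∈ SB.I := by
      have := SB.lmul_mem a hrel
      rwa [lmul_sub_smul] at this
    have h2 : pvec k (a.comp ((a.comp b).pow (n' + 1))) ∈ SB.I := by
      apply infix_mem _ _ hmem
      rw [Path.arrows_comp]
      have hc2a : (comp2 alr al1 (by rw [hsa1, htar])).arrows = [alr, al1] := by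
        simp [comp2, arrow, Path.arrows_comp, Path.arrows]
      rw [hc2a]
      exact pair_infix har hUhead
    have h3 : pvec k (a.comp ((b.comp a).pow (m' + 1))) ∈ SB.I := by
      have h4 := SB.I.sub_mem h2 h1
      rw [sub_sub_cancel] at h4
      have h5 := SB.I.smul_mem c⁻¹ h4
      rwa [smul_smul, inv_mul_cancel₀ hc, one_smul] at h5
    apply hu
    apply infix_mem _ _ h3
    obtain ⟨d, hd⟩ : ∃ d, n' = (m' + 1) + d := ⟨n' - (m' + 1), by omega⟩
    subst hd
    rw [Path.arrows_comp]
    conv_rhs => rw [pow_comp_arrows a b (m' + 1 + d),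
      Path.pow_add (b.comp a) (m' + 1) d, Path.arrows_comp]
    exact ⟨[], ((b.comp a).pow d).arrows ++ b.arrows, by simp⟩
  have hc2 : ¬ n' < m' := by
    intro hlt
    have hba_not : pvec k (comp2 blr al1 (by rw [hsa1, htbr])) ∉ SB.I := by
      intro hmem2
      apply hv
      apply infix_mem _ _ hmem2
      have hc2a : (comp2 blr al1 (by rw [hsa1, htbr])).arrows = [blr, al1] := by
        simp [comp2, arrow, Path.arrows_comp, Path.arrows]
      rw [hc2a]
      show [blr, al1] <:+: ((b.comp a).comp ((b.comp a).pow m')).arrows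
      rw [Path.arrows_comp]
      exact infix_append_left _ (by rw [Path.arrows_comp]; exact pair_infix hbr ha1)
    have hbb_mem : pvec k (comp2 blr bl1 (by rw [hsb1, htbr])) ∈ SB.I := by
      by_contra hno
      have heq := SB.unique_succ blr al1 bl1 (by rw [hsa1, htbr]) (by rw [hsb1, htbr])
        hba_not hno
      exact hdisj al1 (List.mem_of_mem_head? ha1) (heq ▸ List.mem_of_mem_head? hb1)
    have h1 : pvec k (b.comp ((a.comp b).pow (n' + 1))) -
        c • pvec k (b.comp ((b.comp a).pow (m' + 1))) ∈ SB.I := by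
      have := SB.lmul_mem b hrel
      rwa [lmul_sub_smul] at this
    have h2 : pvec k (b.comp ((b.comp a).pow (m' + 1))) ∈ SB.I := by
      apply infix_mem _ _ hbb_mem
      rw [Path.arrows_comp]
      have hc2a : (comp2 blr bl1 (by rw [hsb1, htbr])).arrows = [blr, bl1] := by
        simp [comp2, arrow, Path.arrows_comp, Path.arrows]
      rw [hc2a]
      exact pair_infix hbr hVhead
    have h3 : pvec k (b.comp ((a.comp b).pow (n' + 1))) ∈ SB.I := by
      have h4 := SB.I.add_mem h1 (SB.I.smul_mem c h2)
      rwa [sub_add_cancel] at h4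
    apply hv
    rw [comp_pow_swap] at h3
    apply infix_mem _ _ h3
    obtain ⟨d, hd⟩ : ∃ d, m' + 1 = (n' + 1) + (d + 1) := ⟨m' - n' - 1, by omega⟩
    rw [hd, Path.pow_add (b.comp a) (n' + 1) (d + 1), Path.arrows_comp, Path.arrows_comp]
    show _ <:+: ((b.comp a).pow (n' + 1)).arrows ++
      ((b.comp a).comp ((b.comp a).pow d)).arrows
    rw [Path.arrows_comp]
    exact ⟨[], a.arrows ++ ((b.comp a).pow d).arrows, by simp [Path.arrows_comp]⟩
  omega

end FQuiver
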